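/- Let A be a twisted R-algebra and B := S^{-1}A a twisted localization of A. Then for every n ∈ ℕ there are natural ring isomorphisms P_{B,(n)} ≅ P_B ⊗_{P_A} P_{A,(n)} ≅ B ⊗_A P_{A,(n)} ⊗_A B, where P_{A,(n)} is regarded as an (A,A)-bimodule via the left structure a ↦ a ⊗ 1 and the right structure a ↦ 1 ⊗ a. -/

import Mathlib

open TensorProduct

noncomputable section

/-- The augmentation ideal `I_A ⊆ P_A = A ⊗[R] A`: the kernel of the
multiplication map `a ⊗ b ↦ a * b`. -/
def diagIdeal (R A : Type*) [CommRing R] [CommRing A] [Algebra R A] :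
    Ideal (A ⊗[R] A) :=
  RingHom.ker (Algebra.TensorProduct.lmul' R (S := A))

/-- The endomorphism `σ = σ_A ⊗ id` of `P_A = A ⊗[R] A`. -/
def sigmaP (R A : Type*) [CommRing R] [CommRing A] [Algebra R A]
    (σ : A →ₐ[R] A) : A ⊗[R] A →ₐ[R] A ⊗[R] A :=
  Algebra.TensorProduct.map σ (AlgHom.id R A)

/-- The iterates `σ^n` of `σ = σ_A ⊗ id` on `P_A`. -/
def sigmaPow (R A : Type*) [CommRing R] [CommRing A] [Algebra R A]
    (σ : A →ₐ[R] A) : ℕ → (A ⊗[R] A →ₐ[R] A ⊗[R] A)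
  | 0 => AlgHom.id R _
  | n + 1 => (sigmaP R A σ).comp (sigmaPow R A σ n)

/-- The twisted powers `I_A^{(n)} = I_A · σ(I_A) ⋯ σ^{n-1}(I_A)` (with `I_A^{(0)} = P_A`). -/
def twistedPow (R A : Type*) [CommRing R] [CommRing A] [Algebra R A]
    (σ : A →ₐ[R] A) : ℕ → Ideal (A ⊗[R] A)
  | 0 => ⊤
  | n + 1 => twistedPow R A σ n * Ideal.map (sigmaPow R A σ n) (diagIdeal R A)

/-- The ring of twisted principal parts of order `n`: `P_{A,(n)} = P_A / I_A^{(n+1)}`.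
It is an `A`-algebra via the left structure `a ↦ a ⊗ 1`. -/
abbrev Pparts (R A : Type*) [CommRing R] [CommRing A] [Algebra R A]
    (σ : A →ₐ[R] A) (n : ℕ) : Type _ :=
  (A ⊗[R] A) ⧸ twistedPow R A σ (n + 1)

variable (R A : Type*) [CommRing R] [CommRing A] [Algebra R A] (σ : A →ₐ[R] A) (n : ℕ)
  (B : Type*) [CommRing B] [Algebra R B] [Algebra A B]

/-- `B ⊗_A P_{A,(n)}`, the base change of `P_{A,(n)}` along its left `A`-structure. -/
abbrev T1 : Type _ := B ⊗[A] Pparts R A σ n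

/-- The right `A`-structure `a ↦ 1 ⊗ (1 ⊗ a)` on `B ⊗_A P_{A,(n)}`,
coming from the right `A`-algebra structure `a ↦ 1 ⊗ a` of `P_{A,(n)}`. -/
def prightHom : A →+* T1 R A σ n B :=
  (Algebra.TensorProduct.includeRight :
      Pparts R A σ n →ₐ[A] T1 R A σ n B).toRingHom.comp
    ((Ideal.Quotient.mk (twistedPow R A σ (n + 1))).comp
      (Algebra.TensorProduct.includeRight : A →ₐ[R] A ⊗[R] A).toRingHom)

/-- `B ⊗_A P_{A,(n)}`, regarded as an `A`-algebra via the *right* structure of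
`P_{A,(n)}` (type synonym). -/
def T1R : Type _ := T1 R A σ n B

instance : CommRing (T1R R A σ n B) := inferInstanceAs (CommRing (T1 R A σ n B))

noncomputable instance : Algebra A (T1R R A σ n B) := (prightHom R A σ n B).toAlgebra

/-- The identity map, recording the right `A`-structure. -/
def toT1R : T1 R A σ n B → T1R R A σ n B := fun x => x

/-- The triple tensor product `B ⊗_A P_{A,(n)} ⊗_A B`, where the middle factor is an
`(A,A)`-bimodule via `a ↦ a ⊗ 1` on the left and `a ↦ 1 ⊗ a` on the right. -/
abbrev T2 : Type _ := T1R R A σ n B ⊗[A] B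

section Aux
variable {R₁ A₁ B₁ : Type*} [CommRing R₁] [CommRing A₁] [Algebra R₁ A₁]
    [CommRing B₁] [Algebra R₁ B₁] [Algebra A₁ B₁] [IsScalarTower R₁ A₁ B₁]

local notation "ι" => IsScalarTower.toAlgHom R₁ A₁ B₁
local notation "φ" => Algebra.TensorProduct.map (IsScalarTower.toAlgHom R₁ A₁ B₁) (IsScalarTower.toAlgHom R₁ A₁ B₁)

lemma sigmaP_comm (σA : A₁ →ₐ[R₁] A₁) (σB : B₁ →ₐ[R₁] B₁)
    (hσB : σB.comp ι = AlgHom.comp ι σA) :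
    (sigmaP R₁ B₁ σB).comp φ = AlgHom.comp φ (sigmaP R₁ A₁ σA) := by
  ext a
  · have h := AlgHom.congr_fun hσB a
    simp only [AlgHom.coe_comp, Function.comp_apply, IsScalarTower.coe_toAlgHom'] at h
    simp [sigmaP, h]
  · simp [sigmaP]

lemma sigmaPow_comm (σA : A₁ →ₐ[R₁] A₁) (σB : B₁ →ₐ[R₁] B₁)
    (hσB : σB.comp ι = AlgHom.comp ι σA) (m : ℕ) :
    (sigmaPow R₁ B₁ σB m).comp φ = AlgHom.comp φ (sigmaPow R₁ A₁ σA m) := by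
  induction m with
  | zero => ext a <;> simp [sigmaPow]
  | succ m ih =>
      show ((sigmaP R₁ B₁ σB).comp (sigmaPow R₁ B₁ σB m)).comp φ = _
      rw [AlgHom.comp_assoc, ih, ← AlgHom.comp_assoc, sigmaP_comm σA σB hσB,
        AlgHom.comp_assoc]
      rfl
lemma lmul_comm :
    (Algebra.TensorProduct.lmul' R₁ (S := B₁)).comp φ
      = AlgHom.comp ι (Algebra.TensorProduct.lmul' R₁ (S := A₁)) := by
  ext a <;> simp

lemma diag_map_le : Ideal.map (Algebra.TensorProduct.map ι ι).toRingHom (diagIdeal R₁ A₁)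
    ≤ diagIdeal R₁ B₁ := by
  rw [Ideal.map_le_iff_le_comap]
  intro x hx
  have hx' : Algebra.TensorProduct.lmul' R₁ (S := A₁) x = 0 := hx
  have := AlgHom.congr_fun (lmul_comm (R₁ := R₁) (A₁ := A₁) (B₁ := B₁)) x
  simp only [AlgHom.coe_comp, Function.comp_apply] at this
  show Algebra.TensorProduct.lmul' R₁ (S := B₁) ((Algebra.TensorProduct.map ι ι) x) = 0
  rw [this, hx', map_zero]

lemma diag_map (S : Submonoid A₁) [IsLocalization S B₁] :
    diagIdeal R₁ B₁ = Ideal.map (Algebra.TensorProduct.map ι ι).toRingHom (diagIdeal R₁ A₁) := by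
  refine le_antisymm ?_ diag_map_le
  rw [show diagIdeal R₁ B₁ = KaehlerDifferential.ideal R₁ B₁ from rfl,
    ← KaehlerDifferential.span_range_eq_ideal R₁ B₁, Ideal.span_le]
  rintro _ ⟨b, rfl⟩
  obtain ⟨⟨a, s⟩, has⟩ := IsLocalization.surj S b
  dsimp only at has
  have hmem : (s : A₁) ⊗ₜ[R₁] a - a ⊗ₜ[R₁] (s : A₁) ∈ diagIdeal R₁ A₁ := by
    show Algebra.TensorProduct.lmul' R₁ (S := A₁) _ = 0
    simp [mul_comm]
  have hu : IsUnit ((algebraMap A₁ B₁ s) ⊗ₜ[R₁] (algebraMap A₁ B₁ s) : B₁ ⊗[R₁] B₁) := by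
    have h1 : IsUnit ((algebraMap A₁ B₁ s) ⊗ₜ[R₁] (1 : B₁) : B₁ ⊗[R₁] B₁) :=
      (IsLocalization.map_units B₁ s).map
        (Algebra.TensorProduct.includeLeftRingHom : B₁ →+* B₁ ⊗[R₁] B₁)
    have h2 : IsUnit ((1 : B₁) ⊗ₜ[R₁] (algebraMap A₁ B₁ s) : B₁ ⊗[R₁] B₁) :=
      (IsLocalization.map_units B₁ s).map
        (Algebra.TensorProduct.includeRight : B₁ →ₐ[R₁] B₁ ⊗[R₁] B₁).toRingHom
    have := h1.mul h2
    rwa [Algebra.TensorProduct.tmul_mul_tmul, mul_one, one_mul] at this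
  have hq : ((algebraMap A₁ B₁ s) ⊗ₜ[R₁] (algebraMap A₁ B₁ s) : B₁ ⊗[R₁] B₁) *
      ((1 : B₁) ⊗ₜ[R₁] b - b ⊗ₜ[R₁] (1 : B₁))
      = (Algebra.TensorProduct.map ι ι) ((s : A₁) ⊗ₜ[R₁] a - a ⊗ₜ[R₁] (s : A₁)) := by
    simp only [mul_sub, Algebra.TensorProduct.tmul_mul_tmul, map_sub,
      Algebra.TensorProduct.map_tmul, IsScalarTower.coe_toAlgHom', mul_one, one_mul]
    rw [mul_comm (algebraMap A₁ B₁ (s : A₁)) b, has]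
  obtain ⟨u, husp⟩ := hu
  have key : (1 : B₁) ⊗ₜ[R₁] b - b ⊗ₜ[R₁] (1 : B₁)
      = (↑u⁻¹ : B₁ ⊗[R₁] B₁) * ((Algebra.TensorProduct.map ι ι)
          ((s : A₁) ⊗ₜ[R₁] a - a ⊗ₜ[R₁] (s : A₁))) := by
    rw [← hq, ← husp, ← mul_assoc, Units.inv_mul, one_mul]
  show (1 : B₁) ⊗ₜ[R₁] b - b ⊗ₜ[R₁] (1 : B₁)
      ∈ Ideal.map (Algebra.TensorProduct.map ι ι).toRingHom (diagIdeal R₁ A₁)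
  rw [key]
  exact Ideal.mul_mem_left _ _ (Ideal.mem_map_of_mem _ hmem)

lemma twistedPow_map (S : Submonoid A₁) [IsLocalization S B₁]
    (σA : A₁ →ₐ[R₁] A₁) (σB : B₁ →ₐ[R₁] B₁)
    (hσB : σB.comp ι = AlgHom.comp ι σA) (m : ℕ) :
    twistedPow R₁ B₁ σB m
      = Ideal.map (Algebra.TensorProduct.map ι ι).toRingHom (twistedPow R₁ A₁ σA m) := by
  induction m with
  | zero => simp [twistedPow, Ideal.map_top]
  | succ m ih =>
      show twistedPow R₁ B₁ σB m * _ = _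
      rw [ih, show twistedPow R₁ A₁ σA (m+1)
          = twistedPow R₁ A₁ σA m * Ideal.map (sigmaPow R₁ A₁ σA m) (diagIdeal R₁ A₁) from rfl,
        Ideal.map_mul, diag_map (B₁ := B₁) S,
        show Ideal.map (sigmaPow R₁ B₁ σB m) (Ideal.map (Algebra.TensorProduct.map ι ι).toRingHom (diagIdeal R₁ A₁)) = Ideal.map (sigmaPow R₁ B₁ σB m).toRingHom (Ideal.map (Algebra.TensorProduct.map ι ι).toRingHom (diagIdeal R₁ A₁)) from rfl,
        show Ideal.map (sigmaPow R₁ A₁ σA m) (diagIdeal R₁ A₁) = Ideal.map (sigmaPow R₁ A₁ σA m).toRingHom (diagIdeal R₁ A₁) from rfl,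
        Ideal.map_map, Ideal.map_map]
      congr 1
      have := sigmaPow_comm (B₁ := B₁) σA σB hσB m
      rw [show ((Algebra.TensorProduct.map ι ι).toRingHom.comp
            (sigmaPow R₁ A₁ σA m).toRingHom : _)
          = ((sigmaPow R₁ B₁ σB m).toRingHom.comp
            (Algebra.TensorProduct.map ι ι).toRingHom : _) from ?_]
      · refine RingHom.ext fun x => ?_
        exact congrArg (fun f : (A₁ ⊗[R₁] A₁) →ₐ[R₁] (B₁ ⊗[R₁] B₁) => f x) this.symm

end Aux

/-- Type synonym for `Pparts R₂ B₂ σb m` carrying the right `A₂`-algebra structure. -/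
def PpartsR (R₂ A₂ B₂ : Type*) [CommRing R₂] [CommRing A₂] [Algebra R₂ A₂]
    [CommRing B₂] [Algebra R₂ B₂] [Algebra A₂ B₂] (σb : B₂ →ₐ[R₂] B₂) (m : ℕ) : Type _ :=
  Pparts R₂ B₂ σb m

instance (R₂ A₂ B₂ : Type*) [CommRing R₂] [CommRing A₂] [Algebra R₂ A₂]
    [CommRing B₂] [Algebra R₂ B₂] [Algebra A₂ B₂] (σb : B₂ →ₐ[R₂] B₂) (m : ℕ) :
    CommRing (PpartsR R₂ A₂ B₂ σb m) := inferInstanceAs (CommRing (Pparts R₂ B₂ σb m))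

noncomputable instance (R₂ A₂ B₂ : Type*) [CommRing R₂] [CommRing A₂] [Algebra R₂ A₂]
    [CommRing B₂] [Algebra R₂ B₂] [Algebra A₂ B₂] (σb : B₂ →ₐ[R₂] B₂) (m : ℕ) :
    Algebra A₂ (PpartsR R₂ A₂ B₂ σb m) :=
  ((Ideal.Quotient.mk (twistedPow R₂ B₂ σb (m + 1))).comp
    ((Algebra.TensorProduct.includeRight : B₂ →ₐ[R₂] B₂ ⊗[R₂] B₂).toRingHom.comp
      (algebraMap A₂ B₂))).toAlgebra

set_option maxHeartbeats 2000000 in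
set_option synthInstance.maxHeartbeats 400000 in
/-- For a twisted localization `B = S⁻¹A` of a twisted `R`-algebra `A`, there are
natural ring isomorphisms `P_{B,(n)} ≅ P_B ⊗_{P_A} P_{A,(n)} ≅ B ⊗_A P_{A,(n)} ⊗_A B`
for every `n`. -/
theorem stmt6 (R A B : Type*) [CommRing R] [CommRing A] [Algebra R A]
    [CommRing B] [Algebra R B] [Algebra A B] [IsScalarTower R A B]
    (S : Submonoid A) [IsLocalization S B]
    (σA : A →ₐ[R] A) (hS : ∀ s ∈ S, IsUnit (algebraMap A B (σA s)))
    (σB : B →ₐ[R] B)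
    (hσB : σB.comp (IsScalarTower.toAlgHom R A B) =
      (IsScalarTower.toAlgHom R A B).comp σA)
    [alg : Algebra (A ⊗[R] A) (B ⊗[R] B)]
    (halg : algebraMap (A ⊗[R] A) (B ⊗[R] B) =
      (Algebra.TensorProduct.map (IsScalarTower.toAlgHom R A B)
        (IsScalarTower.toAlgHom R A B)).toRingHom)
    (n : ℕ) :
    (∃ e₁ : (B ⊗[R] B) ⊗[A ⊗[R] A] Pparts R A σA n ≃+* Pparts R B σB n,
        ∀ p : A ⊗[R] A,
          e₁ ((1 : B ⊗[R] B) ⊗ₜ[A ⊗[R] A]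
              Ideal.Quotient.mk (twistedPow R A σA (n + 1)) p) =
            Ideal.Quotient.mk (twistedPow R B σB (n + 1))
              (Algebra.TensorProduct.map (IsScalarTower.toAlgHom R A B)
                (IsScalarTower.toAlgHom R A B) p)) ∧
      (∃ e₂ : T2 R A σA n B ≃+* Pparts R B σB n,
        ∀ p : A ⊗[R] A,
          e₂ (toT1R R A σA n B
                ((1 : B) ⊗ₜ[A] Ideal.Quotient.mk (twistedPow R A σA (n + 1)) p)
              ⊗ₜ[A] (1 : B)) =
            Ideal.Quotient.mk (twistedPow R B σB (n + 1))
              (Algebra.TensorProduct.map (IsScalarTower.toAlgHom R A B)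
                (IsScalarTower.toAlgHom R A B) p)) := by
  classical
  let J : Ideal (A ⊗[R] A) := twistedPow R A σA (n + 1)
  let K : Ideal (B ⊗[R] B) := twistedPow R B σB (n + 1)
  let Φ : A ⊗[R] A →+* B ⊗[R] B :=
    (Algebra.TensorProduct.map (IsScalarTower.toAlgHom R A B)
      (IsScalarTower.toAlgHom R A B)).toRingHom
  have hK : K = Ideal.map Φ J := twistedPow_map S σA σB hσB (n + 1)
  have halg' : algebraMap (A ⊗[R] A) (B ⊗[R] B) = Φ := halg
  let mkA : A ⊗[R] A →+* Pparts R A σA n := Ideal.Quotient.mk J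
  let mkB : B ⊗[R] B →+* Pparts R B σB n := Ideal.Quotient.mk K
  have hmkB0 : ∀ p : A ⊗[R] A, p ∈ J → mkB (Φ p) = 0 := fun p hp => by
    rw [Ideal.Quotient.eq_zero_iff_mem, hK]
    exact Ideal.mem_map_of_mem _ hp
  have hsmulP : ∀ p : A ⊗[R] A, p • (1 : Pparts R A σA n) = mkA p := fun p => by
    show p • Submodule.Quotient.mk (1 : A ⊗[R] A) = mkA p
    rw [← Submodule.Quotient.mk_smul, smul_eq_mul, mul_one]
    rfl
  constructor
  · -- e₁
    -- fBB : (B ⊗ B) →ₐ[A⊗A] Pparts R B σB n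
    let fBB : (B ⊗[R] B) →ₐ[A ⊗[R] A] Pparts R B σB n :=
      AlgHom.mk' mkB (fun p x => by
        rw [Algebra.smul_def, map_mul, Algebra.smul_def]
        congr 1)
    let fP : Pparts R A σA n →ₐ[A ⊗[R] A] Pparts R B σB n :=
      Ideal.Quotient.liftₐ J (Algebra.ofId _ _) (fun p hp => by
        show algebraMap (A ⊗[R] A) (Pparts R B σB n) p = 0
        have : algebraMap (A ⊗[R] A) (Pparts R B σB n) p = mkB (Φ p) := by
          rw [show algebraMap (A ⊗[R] A) (Pparts R B σB n)
              = mkB.comp (algebraMap (A ⊗[R] A) (B ⊗[R] B)) from rfl]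
          rw [halg']
          rfl
        rw [this]
        exact hmkB0 p hp)
    have hfP : ∀ p : A ⊗[R] A, fP (mkA p) = mkB (Φ p) := fun p => by
      show algebraMap (A ⊗[R] A) (Pparts R B σB n) p = mkB (Φ p)
      rw [show algebraMap (A ⊗[R] A) (Pparts R B σB n)
          = mkB.comp (algebraMap (A ⊗[R] A) (B ⊗[R] B)) from rfl]
      rw [halg']
      rfl
    let f := Algebra.TensorProduct.productMap fBB fP
    let g : Pparts R B σB n →+* (B ⊗[R] B) ⊗[A ⊗[R] A] Pparts R A σA n :=
      Ideal.Quotient.lift K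
        (Algebra.TensorProduct.includeLeftRingHom :
          B ⊗[R] B →+* (B ⊗[R] B) ⊗[A ⊗[R] A] Pparts R A σA n)
        (by
          intro x hx
          rw [hK] at hx
          revert x
          rw [show (∀ x ∈ Ideal.map Φ J,
              (Algebra.TensorProduct.includeLeftRingHom :
                B ⊗[R] B →+* (B ⊗[R] B) ⊗[A ⊗[R] A] Pparts R A σA n) x = 0) ↔
              Ideal.map Φ J ≤ RingHom.ker (Algebra.TensorProduct.includeLeftRingHom :
                B ⊗[R] B →+* (B ⊗[R] B) ⊗[A ⊗[R] A] Pparts R A σA n) from Iff.rfl]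
          rw [Ideal.map_le_iff_le_comap]
          intro p hp
          show (Φ p) ⊗ₜ[A ⊗[R] A] (1 : Pparts R A σA n) = 0
          rw [← halg', ← mul_one (algebraMap (A ⊗[R] A) (B ⊗[R] B) p),
            ← Algebra.smul_def, TensorProduct.smul_tmul, hsmulP,
            Ideal.Quotient.eq_zero_iff_mem.mpr hp, TensorProduct.tmul_zero])
    have hfg : ∀ x : B ⊗[R] B, f (g (mkB x)) = mkB x := fun x => by
      show f (x ⊗ₜ[A ⊗[R] A] 1) = mkB x
      rw [Algebra.TensorProduct.productMap_apply_tmul, map_one, mul_one]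
      rfl
    have hgf : ∀ y, g (f y) = y := fun y => by
      induction y using TensorProduct.induction_on with
      | zero => simp
      | add a b ha hb => rw [map_add, map_add, ha, hb]
      | tmul x q =>
          obtain ⟨p, rfl⟩ := Ideal.Quotient.mk_surjective (I := J) q
          rw [Algebra.TensorProduct.productMap_apply_tmul, hfP]
          show g (mkB x * mkB (Φ p)) = _
          rw [← map_mul, show g (mkB (x * Φ p)) = (x * Φ p) ⊗ₜ[A ⊗[R] A] 1 from rfl,
            ← halg', mul_comm, ← Algebra.smul_def, TensorProduct.smul_tmul, hsmulP]
    refine ⟨RingEquiv.ofRingHom f.toRingHom g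
      (Ideal.Quotient.ringHom_ext (RingHom.ext fun x => hfg x))
      (RingHom.ext fun y => hgf y), fun p => ?_⟩
    show f ((1 : B ⊗[R] B) ⊗ₜ[A ⊗[R] A] mkA p) = mkB (Φ p)
    rw [Algebra.TensorProduct.productMap_apply_tmul, map_one, one_mul, hfP]
  · -- e₂
    -- left-structure algebra homs into C := Pparts R B σB n
    let fB : B →ₐ[A] Pparts R B σB n :=
      (Ideal.Quotient.mkₐ A K).comp
        (Algebra.TensorProduct.includeLeft : B →ₐ[A] B ⊗[R] B)
    let ΦA : A ⊗[R] A →ₐ[A] B ⊗[R] B :=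
      Algebra.TensorProduct.map (Algebra.ofId A B) (IsScalarTower.toAlgHom R A B)
    have hΦA : ∀ p : A ⊗[R] A, ΦA p = Φ p := fun p => rfl
    let fQ : Pparts R A σA n →ₐ[A] Pparts R B σB n :=
      Ideal.Quotient.liftₐ J ((Ideal.Quotient.mkₐ A K).comp ΦA) (fun p hp => by
        show mkB (ΦA p) = 0
        rw [hΦA]
        exact hmkB0 p hp)
    have hfQ : ∀ p : A ⊗[R] A, fQ (mkA p) = mkB (Φ p) := fun p => rfl
    let F1 : T1 R A σA n B →ₐ[A] Pparts R B σB n :=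
      Algebra.TensorProduct.lift fB fQ (fun x y => Commute.all _ _)
    have hF1 : ∀ (b : B) (p : A ⊗[R] A),
        F1 (b ⊗ₜ[A] mkA p) = mkB ((b ⊗ₜ[R] (1 : B)) * Φ p) := fun b p => by
      rw [Algebra.TensorProduct.lift_tmul, hfQ,
        show fB b = mkB (b ⊗ₜ[R] (1 : B)) from rfl, ← map_mul]
    -- C with its right A-algebra structure
    let F1rh : T1R R A σA n B →+* PpartsR R A B σB n := F1.toRingHom
    let mkBR : B ⊗[R] B →+* PpartsR R A B σB n := mkB
    have halgC : ∀ a : A, algebraMap A (PpartsR R A B σB n) a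
        = mkB ((1 : B) ⊗ₜ[R] algebraMap A B a) := fun a => rfl
    have hpright : ∀ a : A, prightHom R A σA n B a
        = (1 : B) ⊗ₜ[A] mkA ((1 : A) ⊗ₜ[R] a) := fun a => rfl
    let f1 : T1R R A σA n B →ₐ[A] PpartsR R A B σB n :=
      AlgHom.mk' F1rh (fun a x => by
        have hkey : F1rh (toT1R R A σA n B (prightHom R A σA n B a))
            = mkBR ((1 : B) ⊗ₜ[R] algebraMap A B a) := by
          show F1 ((1 : B) ⊗ₜ[A] mkA ((1 : A) ⊗ₜ[R] a)) = _
          rw [hF1]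
          congr 1
          show ((1 : B) ⊗ₜ[R] (1 : B)) * ((algebraMap A B 1) ⊗ₜ[R] (algebraMap A B a)) = _
          rw [map_one, Algebra.TensorProduct.tmul_mul_tmul, one_mul, one_mul]
        show F1rh (toT1R R A σA n B (prightHom R A σA n B a) * x)
          = mkBR ((1 : B) ⊗ₜ[R] algebraMap A B a) * F1rh x
        rw [map_mul, hkey])
    let f2 : B →ₐ[A] PpartsR R A B σB n :=
      AlgHom.mk' (mkB.comp (Algebra.TensorProduct.includeRight :
          B →ₐ[R] B ⊗[R] B).toRingHom) (fun a b => by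
        show mkB ((1 : B) ⊗ₜ[R] (a • b))
          = mkB ((1 : B) ⊗ₜ[R] algebraMap A B a) * mkB ((1 : B) ⊗ₜ[R] b)
        rw [Algebra.smul_def, ← map_mul, Algebra.TensorProduct.tmul_mul_tmul, one_mul])
    let e₂f : T2 R A σA n B →ₐ[A] PpartsR R A B σB n :=
      Algebra.TensorProduct.lift f1 f2 (fun x y => Commute.all _ _)
    let e₂rh : T2 R A σA n B →+* Pparts R B σB n := e₂f.toRingHom
    -- now the inverse
    letI aT2 : Algebra R (T2 R A σA n B) :=
      ((algebraMap A (T2 R A σA n B)).comp (algebraMap R A)).toAlgebra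
    let toT1Rrh : T1 R A σA n B →+* T1R R A σA n B := RingHom.id (T1 R A σA n B)
    let pLrh : B →+* T2 R A σA n B :=
      (Algebra.TensorProduct.includeLeftRingHom :
          T1R R A σA n B →+* T2 R A σA n B).comp
        (toT1Rrh.comp (Algebra.TensorProduct.includeLeftRingHom :
          B →+* T1 R A σA n B))
    have hpL : ∀ b : B, pLrh b
        = (toT1R R A σA n B (b ⊗ₜ[A] (1 : Pparts R A σA n))) ⊗ₜ[A] (1 : B) := fun b => rfl
    -- key identity in T1
    have hsmulP1 : ∀ a : A, a • (1 : Pparts R A σA n) = mkA (a ⊗ₜ[R] (1 : A)) := by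
      intro a
      show a • Submodule.Quotient.mk (1 : A ⊗[R] A) = mkA _
      rw [← Submodule.Quotient.mk_smul]
      congr 1
      rw [Algebra.TensorProduct.one_def, TensorProduct.smul_tmul', smul_eq_mul, mul_one]
    have hT1a : ∀ a : A, (algebraMap A B a) ⊗ₜ[A] (1 : Pparts R A σA n)
        = (1 : B) ⊗ₜ[A] (mkA (a ⊗ₜ[R] (1 : A))) := fun a => by
      rw [Algebra.algebraMap_eq_smul_one, TensorProduct.smul_tmul, hsmulP1]
    have hscal : ∀ r : R, ((algebraMap R A r) ⊗ₜ[R] (1 : A) : A ⊗[R] A)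
        = (1 : A) ⊗ₜ[R] (algebraMap R A r) := fun r => by
      rw [Algebra.algebraMap_eq_smul_one (A := A) r, TensorProduct.smul_tmul,
        ← Algebra.algebraMap_eq_smul_one]
    have halgT2 : ∀ a : A, algebraMap A (T2 R A σA n B) a
        = (toT1R R A σA n B ((1 : B) ⊗ₜ[A] mkA ((1 : A) ⊗ₜ[R] a))) ⊗ₜ[A] (1 : B) := fun a => by
      rw [Algebra.TensorProduct.algebraMap_apply]
      rfl
    let pL : B →ₐ[R] T2 R A σA n B := AlgHom.mk' pLrh (fun r b => by
      show pLrh (r • b) = algebraMap A (T2 R A σA n B) (algebraMap R A r) * pLrh b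
      rw [Algebra.smul_def, map_mul]
      congr 1
      rw [IsScalarTower.algebraMap_apply R A B, hpL, halgT2, hT1a, hscal])
    let pRrh : B →+* T2 R A σA n B :=
      (Algebra.TensorProduct.includeRight : B →ₐ[A] T2 R A σA n B).toRingHom
    have hpR : ∀ b : B, pRrh b = (1 : T1R R A σA n B) ⊗ₜ[A] b := fun b => rfl
    have hrightsmul : ∀ (a : A) (x : T1 R A σA n B) (b : B),
        (toT1R R A σA n B (prightHom R A σA n B a * x)) ⊗ₜ[A] b
          = (toT1R R A σA n B x) ⊗ₜ[A] (algebraMap A B a * b) := fun a x b => by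
      rw [← Algebra.smul_def, ← TensorProduct.smul_tmul]
      rfl
    let pR : B →ₐ[R] T2 R A σA n B := AlgHom.mk' pRrh (fun r b => by
      show pRrh (r • b) = algebraMap A (T2 R A σA n B) (algebraMap R A r) * pRrh b
      rw [Algebra.smul_def, IsScalarTower.algebraMap_apply R A B, map_mul]
      congr 1
      have hmul1 : ∀ x : T1 R A σA n B, x * 1 = x := fun x => mul_one x
      have h := hrightsmul (algebraMap R A r) 1 1
      rw [hmul1, mul_one] at h
      rw [halgT2,
        show toT1R R A σA n B ((1:B) ⊗ₜ[A] mkA ((1:A) ⊗ₜ[R] (algebraMap R A r)))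
          = toT1R R A σA n B (prightHom R A σA n B (algebraMap R A r)) from rfl, h]
      rfl)
    let ψ : B ⊗[R] B →ₐ[R] T2 R A σA n B := Algebra.TensorProduct.productMap pL pR
    have hψL : ∀ b : B, ψ (b ⊗ₜ[R] (1 : B))
        = (toT1R R A σA n B (b ⊗ₜ[A] (1 : Pparts R A σA n))) ⊗ₜ[A] (1 : B) := fun b => by
      rw [show ψ (b ⊗ₜ[R] (1:B)) = pL b * pR 1 from
          Algebra.TensorProduct.productMap_apply_tmul _ _ _ _,
        map_one, mul_one]
      rfl
    have hψR : ∀ b : B, ψ ((1 : B) ⊗ₜ[R] b) = (1 : T1R R A σA n B) ⊗ₜ[A] b := fun b => by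
      rw [show ψ ((1:B) ⊗ₜ[R] b) = pL 1 * pR b from
          Algebra.TensorProduct.productMap_apply_tmul _ _ _ _,
        map_one, one_mul]
      rfl
    have hchi : ∀ p : A ⊗[R] A, ψ (Φ p)
        = (toT1R R A σA n B ((1 : B) ⊗ₜ[A] mkA p)) ⊗ₜ[A] (1 : B) := by
      intro p
      induction p using TensorProduct.induction_on with
      | zero =>
          rw [map_zero, map_zero, map_zero,
            show ((1:B) ⊗ₜ[A] (0 : Pparts R A σA n)) = 0 from TensorProduct.tmul_zero _ _,
            show toT1R R A σA n B 0 = 0 from rfl, TensorProduct.zero_tmul]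
      | add x y hx hy =>
          rw [map_add, map_add, hx, hy, map_add,
            TensorProduct.tmul_add,
            show toT1R R A σA n B ((1:B) ⊗ₜ[A] mkA x + (1:B) ⊗ₜ[A] mkA y)
            = toT1R R A σA n B ((1:B) ⊗ₜ[A] mkA x) + toT1R R A σA n B ((1:B) ⊗ₜ[A] mkA y) from rfl,
            TensorProduct.add_tmul]
      | tmul a a' =>
          rw [show Φ (a ⊗ₜ[R] a') = (algebraMap A B a) ⊗ₜ[R] (algebraMap A B a') from rfl,
            show ((algebraMap A B a) ⊗ₜ[R] (algebraMap A B a') : B ⊗[R] B)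
              = ((algebraMap A B a) ⊗ₜ[R] (1:B)) * ((1:B) ⊗ₜ[R] (algebraMap A B a')) by
                rw [Algebra.TensorProduct.tmul_mul_tmul, one_mul, mul_one],
            map_mul, hψL, hψR]
          rw [Algebra.TensorProduct.tmul_mul_tmul, mul_one, one_mul]
          rw [hT1a a]
          rw [show (algebraMap A B a' : B) = algebraMap A B a' * 1 from (mul_one _).symm,
            ← hrightsmul a']
          congr 2
          rw [hpright, Algebra.TensorProduct.tmul_mul_tmul, one_mul, ← map_mul,
            Algebra.TensorProduct.tmul_mul_tmul, one_mul, mul_one]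
    let g₂ : Pparts R B σB n →+* T2 R A σA n B :=
      Ideal.Quotient.lift K ψ.toRingHom (by
        intro x hx
        rw [hK] at hx
        revert x
        rw [show (∀ x ∈ Ideal.map Φ J, ψ.toRingHom x = 0) ↔
            Ideal.map Φ J ≤ RingHom.ker ψ.toRingHom from Iff.rfl,
          Ideal.map_le_iff_le_comap]
        intro p hp
        show ψ (Φ p) = 0
        rw [hchi, Ideal.Quotient.eq_zero_iff_mem.mpr hp]
        rw [show toT1R R A σA n B ((1:B) ⊗ₜ[A] (0 : Pparts R A σA n)) = 0 by
          rw [TensorProduct.tmul_zero]; rfl]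
        rw [TensorProduct.zero_tmul])
    have hg₂ : ∀ x : B ⊗[R] B, g₂ (mkB x) = ψ x := fun x => rfl
    have h1 : ∀ x : B ⊗[R] B, e₂rh (g₂ (mkB x)) = mkB x := by
      intro x
      rw [hg₂]
      induction x using TensorProduct.induction_on with
      | zero => rw [map_zero, map_zero, map_zero]
      | add x y hx hy => rw [map_add, map_add, hx, hy, map_add]
      | tmul b b' =>
          rw [show ψ (b ⊗ₜ[R] b') = ψ ((b ⊗ₜ[R] (1:B)) * ((1:B) ⊗ₜ[R] b')) by
              rw [Algebra.TensorProduct.tmul_mul_tmul, one_mul, mul_one],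
            map_mul, map_mul, hψL, hψR]
          rw [show e₂rh ((toT1R R A σA n B (b ⊗ₜ[A] (1 : Pparts R A σA n))) ⊗ₜ[A] (1:B))
              = f1 (toT1R R A σA n B (b ⊗ₜ[A] (1 : Pparts R A σA n))) * f2 1
              from Algebra.TensorProduct.lift_tmul f1 f2 (fun x y => Commute.all _ _) _ _,
            show e₂rh ((1 : T1R R A σA n B) ⊗ₜ[A] b') = f1 1 * f2 b'
              from Algebra.TensorProduct.lift_tmul f1 f2 (fun x y => Commute.all _ _) _ _,
            map_one, map_one, mul_one, one_mul]
          rw [show f1 (toT1R R A σA n B (b ⊗ₜ[A] (1 : Pparts R A σA n)))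
              = F1 (b ⊗ₜ[A] (1 : Pparts R A σA n)) from rfl,
            show (1 : Pparts R A σA n) = mkA 1 from rfl, hF1,
            show f2 b' = mkB ((1:B) ⊗ₜ[R] b') from rfl,
            map_one, mul_one, ← map_mul, Algebra.TensorProduct.tmul_mul_tmul,
            one_mul, mul_one]
    have hgf1 : ∀ t : T1 R A σA n B,
        g₂ (F1 t) = (toT1R R A σA n B t) ⊗ₜ[A] (1 : B) := by
      intro t
      induction t using TensorProduct.induction_on with
      | zero =>
          rw [map_zero, map_zero, show toT1R R A σA n B 0 = 0 from rfl,
            TensorProduct.zero_tmul]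
      | add x y hx hy =>
          rw [map_add, map_add, hx, hy,
            show toT1R R A σA n B (x + y) = toT1R R A σA n B x + toT1R R A σA n B y from rfl,
            TensorProduct.add_tmul]
      | tmul b q =>
          obtain ⟨p, rfl⟩ := Ideal.Quotient.mk_surjective (I := J) q
          rw [hF1, show g₂ (mkB ((b ⊗ₜ[R] (1:B)) * Φ p)) = ψ ((b ⊗ₜ[R] (1:B)) * Φ p) from rfl,
            map_mul, hψL, hchi, Algebra.TensorProduct.tmul_mul_tmul, mul_one]
          congr 1
          show toT1R R A σA n B ((b ⊗ₜ[A] (1 : Pparts R A σA n)) * ((1:B) ⊗ₜ[A] mkA p)) = _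
          rw [Algebra.TensorProduct.tmul_mul_tmul, one_mul, mul_one]
    have h2 : ∀ x : T2 R A σA n B, g₂ (e₂rh x) = x := by
      intro x
      induction x using TensorProduct.induction_on with
      | zero => rw [map_zero, map_zero]
      | add x y hx hy => rw [map_add, map_add, hx, hy]
      | tmul t b =>
          rw [show e₂rh (t ⊗ₜ[A] b) = f1 t * f2 b
              from Algebra.TensorProduct.lift_tmul f1 f2 (fun x y => Commute.all _ _) _ _,
            show g₂ (f1 t * f2 b) = g₂ (f1 t) * g₂ (f2 b) from map_mul g₂ _ _, show g₂ (f2 b) = ψ ((1:B) ⊗ₜ[R] b) from rfl, hψR,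
            show g₂ (f1 t) = g₂ (F1 (@id (T1 R A σA n B) t)) from rfl, hgf1,
            Algebra.TensorProduct.tmul_mul_tmul, mul_one, one_mul]
          rfl
    refine ⟨RingEquiv.ofRingHom e₂rh g₂
      (Ideal.Quotient.ringHom_ext (RingHom.ext fun x => h1 x))
      (RingHom.ext fun x => h2 x), fun p => ?_⟩
    show e₂rh ((toT1R R A σA n B ((1:B) ⊗ₜ[A] mkA p)) ⊗ₜ[A] (1:B)) = mkB (Φ p)
    rw [show e₂rh ((toT1R R A σA n B ((1:B) ⊗ₜ[A] mkA p)) ⊗ₜ[A] (1:B))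
        = f1 (toT1R R A σA n B ((1:B) ⊗ₜ[A] mkA p)) * f2 1
        from Algebra.TensorProduct.lift_tmul f1 f2 (fun x y => Commute.all _ _) _ _,
      map_one, mul_one,
      show f1 (toT1R R A σA n B ((1:B) ⊗ₜ[A] mkA p)) = F1 ((1:B) ⊗ₜ[A] mkA p) from rfl,
      hF1]
    rw [show ((1:B) ⊗ₜ[R] (1:B) : B ⊗[R] B) = 1 from rfl, one_mul]
end
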